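/- Let n ≥ 1, let R(t) ∈ ℂ[[t]], let m ≥ 1 and let k_1,…,k_m be positive integers. Then ψ_n(R(t)·∏_{i=1}^{m}(1−t^{k_i})^{−1}) · ∏_{i=1}^{m}(1−z^{k_i}) = ψ_n(R(t)·Q_n(t^{k_1})·Q_n(t^{k_2})⋯Q_n(t^{k_m})) in ℂ[[z,t]], where Q_n(u) = 1 + u + u² + ⋯ + u^{n−1}. -/

import Mathlib

/-- ψ_n : ℂ[[t]] → ℂ[[z,t]]. -/
noncomputable def psi (n : ℕ) (F : PowerSeries ℂ) : MvPowerSeries (Fin 2) ℂ :=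
  fun e => if e 1 < n ∧ e 1 ≤ n * e 0 then PowerSeries.coeff (n * e 0 - e 1) F else 0

lemma psi_coeff (n : ℕ) (F : PowerSeries ℂ) (e : Fin 2 →₀ ℕ) :
    MvPowerSeries.coeff e (psi n F) =
      if e 1 < n ∧ e 1 ≤ n * e 0 then PowerSeries.coeff (n * e 0 - e 1) F else 0 := rfl

lemma psi_sub (n : ℕ) (F G : PowerSeries ℂ) : psi n (F - G) = psi n F - psi n G := by
  ext e
  simp only [map_sub, psi_coeff]
  split_ifs <;> simp

lemma psi_X_pow_mul (n k : ℕ) (hn : 1 ≤ n) (F : PowerSeries ℂ) :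
    psi n (PowerSeries.X ^ (n * k) * F) = psi n F * MvPowerSeries.X 0 ^ k := by
  ext e
  rw [MvPowerSeries.X_pow_eq, MvPowerSeries.coeff_mul_monomial, psi_coeff, psi_coeff,
    PowerSeries.coeff_X_pow_mul']
  have h0 : (e - Finsupp.single (0 : Fin 2) k : Fin 2 →₀ ℕ) 0 = e 0 - k := by simp
  have h1 : (e - Finsupp.single (0 : Fin 2) k : Fin 2 →₀ ℕ) 1 = e 1 := by
    simp [Finsupp.single_apply]
  have hmul : n * (e 0 - k) = n * e 0 - n * k := Nat.mul_sub n (e 0) k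
  simp only [Finsupp.single_le_iff, h0, h1, hmul, mul_one]
  obtain ⟨A, hA⟩ : ∃ A, n * e 0 = A := ⟨_, rfl⟩
  obtain ⟨K, hKe⟩ : ∃ K, n * k = K := ⟨_, rfl⟩
  simp only [hA, hKe]
  by_cases hka : k ≤ e 0
  · have hK : K ≤ A := by rw [← hA, ← hKe]; exact Nat.mul_le_mul_left n hka
    simp only [if_pos hka]
    split_ifs <;> first
      | rfl
      | (exfalso; omega)
      | (rw [show A - e 1 - K = A - K - e 1 by omega])
  · have hlt : A < K := by
      rw [← hA, ← hKe]
      have h := Nat.mul_le_mul_left n (show e 0 + 1 ≤ k by omega)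
      calc n * e 0 < n * e 0 + n := by omega
        _ = n * (e 0 + 1) := by ring
        _ ≤ n * k := h
    simp only [if_neg hka]
    split_ifs <;> first
      | rfl
      | (exfalso; omega)

lemma psi_mul_one_sub (n k : ℕ) (hn : 1 ≤ n) (G : PowerSeries ℂ) :
    psi n (G * (1 - PowerSeries.X ^ (n * k)))
      = psi n G * (1 - (MvPowerSeries.X 0 : MvPowerSeries (Fin 2) ℂ) ^ k) := by
  have h : G * (1 - PowerSeries.X ^ (n * k)) = G - PowerSeries.X ^ (n * k) * G := by ring
  rw [h, psi_sub, psi_X_pow_mul n k hn G, mul_one_sub]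

lemma psi_prod (n : ℕ) (hn : 1 ≤ n) (F : PowerSeries ℂ) {m : ℕ} (k : Fin m → ℕ)
    (s : Finset (Fin m)) :
    psi n F * ∏ i ∈ s, (1 - (MvPowerSeries.X 0 : MvPowerSeries (Fin 2) ℂ) ^ (k i))
      = psi n (F * ∏ i ∈ s, (1 - PowerSeries.X ^ (n * k i))) := by
  induction s using Finset.cons_induction with
  | empty => simp
  | cons a s ha ih =>
    rw [Finset.prod_cons, Finset.prod_cons]
    calc psi n F * ((1 - (MvPowerSeries.X 0 : MvPowerSeries (Fin 2) ℂ) ^ (k a)) *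
            ∏ i ∈ s, (1 - (MvPowerSeries.X 0 : MvPowerSeries (Fin 2) ℂ) ^ (k i)))
        = (psi n F * ∏ i ∈ s, (1 - (MvPowerSeries.X 0 : MvPowerSeries (Fin 2) ℂ) ^ (k i))) *
            (1 - (MvPowerSeries.X 0 : MvPowerSeries (Fin 2) ℂ) ^ (k a)) := by ring
      _ = psi n (F * ∏ i ∈ s, (1 - PowerSeries.X ^ (n * k i))) *
            (1 - (MvPowerSeries.X 0 : MvPowerSeries (Fin 2) ℂ) ^ (k a)) := by rw [ih]
      _ = psi n ((F * ∏ i ∈ s, (1 - PowerSeries.X ^ (n * k i))) *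
            (1 - PowerSeries.X ^ (n * k a))) := (psi_mul_one_sub n (k a) hn _).symm
      _ = psi n (F * ((1 - PowerSeries.X ^ (n * k a)) *
            ∏ i ∈ s, (1 - PowerSeries.X ^ (n * k i)))) := congrArg (psi n) (by ring)

lemma inv_geom (n k : ℕ) (hk : 1 ≤ k) :
    ((1 - (PowerSeries.X : PowerSeries ℂ) ^ k)⁻¹) * (1 - PowerSeries.X ^ (n * k))
      = ∑ s ∈ Finset.range n, (PowerSeries.X : PowerSeries ℂ) ^ (k * s) := by
  have hc : PowerSeries.constantCoeff (1 - (PowerSeries.X : PowerSeries ℂ) ^ k) ≠ 0 := by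
    have : k ≠ 0 := by omega
    simp [this]
  have hgeom : (1 - (PowerSeries.X : PowerSeries ℂ) ^ k) *
      ∑ s ∈ Finset.range n, (PowerSeries.X : PowerSeries ℂ) ^ (k * s)
      = 1 - PowerSeries.X ^ (n * k) := by
    have h := geom_sum_mul ((PowerSeries.X : PowerSeries ℂ) ^ k) n
    have h2 : ∀ s : ℕ, ((PowerSeries.X : PowerSeries ℂ) ^ k) ^ s = PowerSeries.X ^ (k * s) :=
      fun s => by rw [← pow_mul]
    simp only [h2] at h
    rw [mul_comm n k]
    linear_combination -h
  rw [← hgeom, ← mul_assoc, PowerSeries.inv_mul_cancel _ hc, one_mul]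

theorem stmt9 (n : ℕ) (hn : 1 ≤ n) (R : PowerSeries ℂ) (m : ℕ) (hm : 1 ≤ m)
    (k : Fin m → ℕ) (hk : ∀ i, 1 ≤ k i) :
    psi n (R * ∏ i, (1 - (PowerSeries.X : PowerSeries ℂ) ^ (k i))⁻¹) *
        ∏ i, (1 - (MvPowerSeries.X 0 : MvPowerSeries (Fin 2) ℂ) ^ (k i))
      = psi n (R * ∏ i, ∑ s ∈ Finset.range n, (PowerSeries.X : PowerSeries ℂ) ^ (k i * s)) := by
  rw [psi_prod n hn _ k Finset.univ]
  refine congrArg (psi n) ?_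
  rw [mul_assoc, ← Finset.prod_mul_distrib]
  refine congrArg (fun p => R * p) ?_
  exact Finset.prod_congr rfl fun i _ => inv_geom n (k i) (hk i)
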